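/- For r, d ∈ ℕ with r ≥ 1 there is c > 0 such that for all n ≥ 2: ∫_{D_n} h_r(x)^{−1} dx ≤ c · n^{1−2r} (log n)^{d−1}, where D_n = {x ∈ ℝ^d : ∏_{j=1}^d |x_j| ≥ n} and h_r(x) = ∏_{j=1}^d Σ_{k=0}^r |2πx_j|^{2k}. -/

import Mathlib

open MeasureTheory Set
open scoped ENNReal

noncomputable section

/-- The weight function `h_r`. -/
def hrw {d : ℕ} (r : ℕ) (x : Fin d → ℝ) : ℝ :=
  ∏ j, ∑ k ∈ Finset.range (r + 1), |2 * Real.pi * x j| ^ (2 * k)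

namespace Stmt13Aux

def Mx (s : ℝ) : ℝ := max 1 |s|

lemma Mx_one_le (s : ℝ) : 1 ≤ Mx s := le_max_left _ _
lemma Mx_pos (s : ℝ) : 0 < Mx s := lt_of_lt_of_le one_pos (Mx_one_le s)
lemma Mx_abs_le (s : ℝ) : |s| ≤ Mx s := le_max_right _ _
lemma measurable_Mx : Measurable Mx := (continuous_const.max continuous_abs).measurable

def gE (r : ℕ) (s : ℝ) : ℝ≥0∞ := ENNReal.ofReal ((Mx s ^ (2 * r))⁻¹)

lemma measurable_gE (r : ℕ) : Measurable (gE r) :=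
  ENNReal.measurable_ofReal.comp ((measurable_Mx.pow_const _).inv)

def fI (r d : ℕ) (t : ℝ) : (Fin d → ℝ) → ℝ≥0∞ :=
  ({x : Fin d → ℝ | t ≤ ∏ j, Mx (x j)}).indicator (fun x => ∏ j, gE r (x j))

lemma measurableSet_region (d : ℕ) (t : ℝ) :
    MeasurableSet {x : Fin d → ℝ | t ≤ ∏ j, Mx (x j)} :=
  measurableSet_le measurable_const (Finset.measurable_prod _ fun j _ =>
    measurable_Mx.comp (measurable_pi_apply j))

lemma measurable_fI (r d : ℕ) (t : ℝ) : Measurable (fI r d t) :=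
  Measurable.indicator (Finset.measurable_prod _ fun j _ =>
    (measurable_gE r).comp (measurable_pi_apply j)) (measurableSet_region d t)

def Ii (r d : ℕ) (t : ℝ) : ℝ≥0∞ := ∫⁻ x : Fin d → ℝ, fI r d t x

lemma fI_anti (r d : ℕ) {t₁ t₂ : ℝ} (h : t₁ ≤ t₂) (x : Fin d → ℝ) :
    fI r d t₂ x ≤ fI r d t₁ x := by
  classical
  simp only [fI, indicator_apply, mem_setOf_eq]
  split_ifs with h2 h1
  · exact le_rfl
  · exact absurd (h.trans h2) h1
  · exact zero_le
  · exact le_rfl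

lemma Ii_anti (r d : ℕ) {t₁ t₂ : ℝ} (h : t₁ ≤ t₂) : Ii r d t₂ ≤ Ii r d t₁ :=
  lintegral_mono (fI_anti r d h)

lemma gE_le_one (r : ℕ) (s : ℝ) : gE r s ≤ 1 := by
  rw [gE, ← ENNReal.ofReal_one]
  apply ENNReal.ofReal_le_ofReal
  rw [inv_le_one_iff₀]
  right
  exact one_le_pow₀ (Mx_one_le s)

lemma lint_neg (f : ℝ → ℝ≥0∞) (hf : Measurable f) (s : Set ℝ) (hs : MeasurableSet s) :
    ∫⁻ x in (fun x : ℝ => -x) ⁻¹' s, f (-x) = ∫⁻ x in s, f x := by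
  calc ∫⁻ x in (fun x : ℝ => -x) ⁻¹' s, f (-x)
      = ∫⁻ y in s, f y ∂(Measure.map (fun x : ℝ => -x) volume) :=
        (setLIntegral_map hs hf measurable_neg).symm
    _ = ∫⁻ y in s, f y := by rw [Measure.map_neg_eq_self]

lemma lint_ofReal_eq (s : Set ℝ) (hm : MeasurableSet s) (f : ℝ → ℝ) (hi : IntegrableOn f s)
    (hnn : ∀ x ∈ s, 0 ≤ f x) :
    ∫⁻ x in s, ENNReal.ofReal (f x) = ENNReal.ofReal (∫ x in s, f x) :=
  (ofReal_integral_eq_lintegral_ofReal hi ((ae_restrict_iff' hm).2 (ae_of_all _ hnn))).symm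

lemma tail_Ici (r : ℕ) (hr : 1 ≤ r) {c : ℝ} (hc : 1 ≤ c) :
    ∫⁻ s in Ici c, gE r s ≤ ENNReal.ofReal (c ^ ((1:ℝ) - 2 * r)) := by
  have hr1 : (1:ℝ) ≤ (r:ℝ) := by exact_mod_cast hr
  have hc0 : (0:ℝ) < c := lt_of_lt_of_le one_pos hc
  have hexp : (-(2*(r:ℝ))) < -1 := by nlinarith
  have heq : ∀ s ∈ Ici c, gE r s = ENNReal.ofReal (s ^ (-(2*(r:ℝ)))) := by
    intro s hs
    have h1 : (1:ℝ) ≤ s := hc.trans hs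
    have h0 : (0:ℝ) < s := lt_of_lt_of_le one_pos h1
    have hM : Mx s = s := by rw [Mx, abs_of_pos h0]; exact max_eq_right h1
    rw [gE, hM, Real.rpow_neg h0.le]
    congr 1
    rw [show (2*(r:ℝ)) = ((2*r : ℕ) : ℝ) by push_cast; ring, Real.rpow_natCast]
  rw [setLIntegral_congr_fun measurableSet_Ici heq,
    ← Measure.restrict_congr_set Ioi_ae_eq_Ici,
    lint_ofReal_eq _ measurableSet_Ioi _ (integrableOn_Ioi_rpow_of_lt hexp hc0)
      (fun x hx => Real.rpow_nonneg (le_of_lt (hc0.trans hx)) _),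
    integral_Ioi_rpow_of_lt hexp hc0]
  apply ENNReal.ofReal_le_ofReal
  have hA : (0:ℝ) < c ^ ((1:ℝ) - 2*r) := Real.rpow_pos_of_pos hc0 _
  have he : -(2*(r:ℝ)) + 1 = (1:ℝ) - 2*r := by ring
  rw [he]
  rw [div_le_iff_of_neg (by linarith : (1:ℝ) - 2*r < 0)]
  nlinarith

lemma gE_neg (r : ℕ) (s : ℝ) : gE r (-s) = gE r s := by rw [gE, gE, Mx, Mx, abs_neg]

lemma tail_Iic (r : ℕ) (hr : 1 ≤ r) {c : ℝ} (hc : 1 ≤ c) :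
    ∫⁻ s in Iic (-c), gE r s ≤ ENNReal.ofReal (c ^ ((1:ℝ) - 2 * r)) := by
  have hpre : (fun x : ℝ => -x) ⁻¹' (Ici c) = Iic (-c) := by
    ext x; simp [le_neg]
  have := lint_neg (gE r) (measurable_gE r) (Ici c) measurableSet_Ici
  rw [hpre] at this
  simp only [gE_neg] at this
  rw [this]
  exact tail_Ici r hr hc

lemma tail (r : ℕ) (hr : 1 ≤ r) {t : ℝ} (ht : 1 ≤ t) :
    ∫⁻ s in {s : ℝ | t ≤ Mx s}, gE r s ≤ ENNReal.ofReal (4 * t ^ ((1:ℝ) - 2 * r)) := by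
  have hta : (0:ℝ) ≤ t ^ ((1:ℝ) - 2*r) := Real.rpow_nonneg (by linarith) _
  rcases eq_or_lt_of_le ht with h1 | h1
  · subst h1
    have hset : {s : ℝ | (1:ℝ) ≤ Mx s} = univ := eq_univ_of_forall fun s => Mx_one_le s
    rw [hset, Measure.restrict_univ, ← setLIntegral_univ]
    have hsub : (univ : Set ℝ) ⊆ Iic (-1) ∪ (Icc (-1) 1 ∪ Ici 1) := by
      intro x _
      rcases le_total x (-1) with h | h
      · exact Or.inl h
      rcases le_total x 1 with h' | h'
      · exact Or.inr (Or.inl ⟨h, h'⟩)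
      · exact Or.inr (Or.inr h')
    calc ∫⁻ s in univ, gE r s ≤ ∫⁻ s in Iic (-1) ∪ (Icc (-1) 1 ∪ Ici 1), gE r s :=
          lintegral_mono_set hsub
      _ ≤ (∫⁻ s in Iic (-1), gE r s) + ((∫⁻ s in Icc (-1) 1, gE r s) + ∫⁻ s in Ici 1, gE r s) :=
          le_trans (lintegral_union_le _ _ _) (add_le_add le_rfl (lintegral_union_le _ _ _))
      _ ≤ ENNReal.ofReal 1 + (ENNReal.ofReal 2 + ENNReal.ofReal 1) := by
          gcongr
          · simpa using tail_Iic r hr le_rfl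
          · calc ∫⁻ s in Icc (-1) 1, gE r s ≤ ∫⁻ _ in Icc (-1:ℝ) 1, 1 :=
                  setLIntegral_mono measurable_const fun s _ => gE_le_one r s
              _ = volume (Icc (-1:ℝ) 1) := setLIntegral_one _
              _ = ENNReal.ofReal 2 := by rw [Real.volume_Icc]; norm_num
          · simpa using tail_Ici r hr le_rfl
      _ ≤ ENNReal.ofReal (4 * (1:ℝ) ^ ((1:ℝ) - 2 * r)) := by
          rw [← ENNReal.ofReal_add (by norm_num) (by norm_num),
            ← ENNReal.ofReal_add (by norm_num) (by norm_num)]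
          apply ENNReal.ofReal_le_ofReal
          rw [Real.one_rpow]; norm_num
  · have hset : {s : ℝ | t ≤ Mx s} = Iic (-t) ∪ Ici t := by
      ext s
      simp only [mem_setOf_eq, Mx, mem_union, mem_Iic, mem_Ici, le_max_iff, le_abs]
      constructor
      · rintro (h | h | h)
        · linarith
        · exact Or.inr h
        · exact Or.inl (by linarith)
      · rintro (h | h)
        · exact Or.inr (Or.inr (by linarith))
        · exact Or.inr (Or.inl h)
    rw [hset]
    calc ∫⁻ s in Iic (-t) ∪ Ici t, gE r s
        ≤ (∫⁻ s in Iic (-t), gE r s) + ∫⁻ s in Ici t, gE r s := lintegral_union_le _ _ _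
      _ ≤ ENNReal.ofReal (t ^ ((1:ℝ) - 2*r)) + ENNReal.ofReal (t ^ ((1:ℝ) - 2*r)) :=
          add_le_add (tail_Iic r hr ht) (tail_Ici r hr ht)
      _ ≤ ENNReal.ofReal (4 * t ^ ((1:ℝ) - 2 * r)) := by
          rw [← ENNReal.ofReal_add hta hta]
          apply ENNReal.ofReal_le_ofReal
          linarith

lemma right_piece {t : ℝ} (ht : 1 ≤ t) :
    ∫⁻ s in Icc 1 t, ENNReal.ofReal (Mx s)⁻¹ ≤ ENNReal.ofReal (Real.log t) := by
  have heq : ∀ s ∈ Icc (1:ℝ) t, ENNReal.ofReal (Mx s)⁻¹ = ENNReal.ofReal s⁻¹ := by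
    intro s hs
    have h1 : (1:ℝ) ≤ s := hs.1
    have hM : Mx s = s := by
      rw [Mx, abs_of_pos (lt_of_lt_of_le one_pos h1)]; exact max_eq_right h1
    rw [hM]
  rw [setLIntegral_congr_fun measurableSet_Icc heq]
  have hi : IntegrableOn (fun s : ℝ => s⁻¹) (Icc 1 t) := by
    apply ContinuousOn.integrableOn_compact isCompact_Icc
    apply ContinuousOn.inv₀ continuousOn_id
    intro x hx
    exact ne_of_gt (lt_of_lt_of_le one_pos hx.1)
  rw [lint_ofReal_eq _ measurableSet_Icc _ hi
    (fun x hx => inv_nonneg.2 (le_trans zero_le_one hx.1))]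
  apply ENNReal.ofReal_le_ofReal
  rw [integral_Icc_eq_integral_Ioc, ← intervalIntegral.integral_of_le ht,
    integral_inv (by
      intro h
      rcases h with ⟨h1, h2⟩
      simp only [inf_le_iff, le_inf_iff] at *
      rcases h1 with h | h <;> nlinarith [le_sup_left (a := (1:ℝ)) (b := t)] )]
  rw [div_one]

lemma logpiece {t : ℝ} (ht : 1 ≤ t) :
    ∫⁻ s in {s : ℝ | Mx s < t}, ENNReal.ofReal (Mx s)⁻¹ ≤
      ENNReal.ofReal (2 + 2 * Real.log t) := by
  have hlog : (0:ℝ) ≤ Real.log t := Real.log_nonneg ht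
  have hsub : {s : ℝ | Mx s < t} ⊆ Icc (-t) (-1) ∪ (Icc (-1) 1 ∪ Icc 1 t) := by
    intro s hs
    have habs : |s| < t := lt_of_le_of_lt (Mx_abs_le s) hs
    rw [abs_lt] at habs
    rcases le_total s (-1) with h | h
    · exact Or.inl ⟨habs.1.le, h⟩
    rcases le_total s 1 with h' | h'
    · exact Or.inr (Or.inl ⟨h, h'⟩)
    · exact Or.inr (Or.inr ⟨h', habs.2.le⟩)
  have hleft : ∫⁻ s in Icc (-t) (-1), ENNReal.ofReal (Mx s)⁻¹ ≤ ENNReal.ofReal (Real.log t) := by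
    have hpre : (fun x : ℝ => -x) ⁻¹' (Icc 1 t) = Icc (-t) (-1) := by
      ext x
      simp only [mem_preimage, mem_Icc]
      constructor
      · rintro ⟨h1, h2⟩; constructor <;> linarith
      · rintro ⟨h1, h2⟩; constructor <;> linarith
    have hMneg : ∀ x : ℝ, ENNReal.ofReal (Mx (-x))⁻¹ = ENNReal.ofReal (Mx x)⁻¹ := by
      intro x; rw [Mx, Mx, abs_neg]
    have := lint_neg (fun s => ENNReal.ofReal (Mx s)⁻¹)
      (ENNReal.measurable_ofReal.comp measurable_Mx.inv) (Icc 1 t) measurableSet_Icc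
    rw [hpre] at this
    simp only [hMneg] at this
    rw [this]
    exact right_piece ht
  have hmid : ∫⁻ s in Icc (-1:ℝ) 1, ENNReal.ofReal (Mx s)⁻¹ ≤ ENNReal.ofReal 2 := by
    calc ∫⁻ s in Icc (-1:ℝ) 1, ENNReal.ofReal (Mx s)⁻¹ ≤ ∫⁻ _ in Icc (-1:ℝ) 1, 1 := by
          apply setLIntegral_mono measurable_const
          intro s _
          rw [← ENNReal.ofReal_one]
          exact ENNReal.ofReal_le_ofReal (inv_le_one_of_one_le₀ (Mx_one_le s))
      _ = volume (Icc (-1:ℝ) 1) := setLIntegral_one _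
      _ = ENNReal.ofReal 2 := by rw [Real.volume_Icc]; norm_num
  calc ∫⁻ s in {s : ℝ | Mx s < t}, ENNReal.ofReal (Mx s)⁻¹
      ≤ ∫⁻ s in Icc (-t) (-1) ∪ (Icc (-1) 1 ∪ Icc 1 t), ENNReal.ofReal (Mx s)⁻¹ :=
        lintegral_mono_set hsub
    _ ≤ ENNReal.ofReal (Real.log t) + (ENNReal.ofReal 2 + ENNReal.ofReal (Real.log t)) := by
        refine le_trans (lintegral_union_le _ _ _) ?_
        refine add_le_add hleft (le_trans (lintegral_union_le _ _ _)
          (add_le_add hmid (right_piece ht)))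
    _ = ENNReal.ofReal (2 + 2 * Real.log t) := by
        rw [← ENNReal.ofReal_add (by norm_num) hlog, ← ENNReal.ofReal_add hlog (by linarith)]
        ring_nf

lemma Ii_zero (r : ℕ) (t : ℝ) : Ii r 0 t = if t ≤ 1 then 1 else 0 := by
  unfold Ii fI
  have h : ∀ x : Fin 0 → ℝ, ({x : Fin 0 → ℝ | t ≤ ∏ j, Mx (x j)}).indicator
      (fun x => ∏ j, gE r (x j)) x = if t ≤ 1 then 1 else 0 := by
    intro x
    simp [indicator_apply]
  rw [lintegral_congr h, lintegral_const]
  have h2 : (volume : Measure (Fin 0 → ℝ)) univ = 1 := by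
    rw [volume_pi, Measure.pi_univ]; simp
  rw [h2, mul_one]

lemma fI_insertNth (r d : ℕ) (t : ℝ) (s : ℝ) (y : Fin d → ℝ) :
    fI r (d+1) t (Fin.insertNth 0 s y) = gE r s * fI r d (t / Mx s) y := by
  set x : Fin (d+1) → ℝ := Fin.insertNth 0 s y with hx
  have h0 : x 0 = s := by
    rw [hx]; exact Fin.insertNth_apply_same (α := fun _ : Fin (d+1) => ℝ) 0 s y
  have hsucc : ∀ j : Fin d, x ((0 : Fin (d+1)).succAbove j) = y j := fun j => by
    rw [hx]; exact Fin.insertNth_apply_succAbove (α := fun _ : Fin (d+1) => ℝ) 0 s y j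
  have hprod : ∏ j, Mx (x j) = Mx s * ∏ j, Mx (y j) := by
    rw [Fin.prod_univ_succAbove (fun j => Mx (x j)) 0, h0]
    congr 1
  have hprod2 : ∏ j, gE r (x j) = gE r s * ∏ j, gE r (y j) := by
    rw [Fin.prod_univ_succAbove (fun j => gE r (x j)) 0, h0]
    congr 1
  have hiff : t ≤ ∏ j, Mx (x j) ↔ t / Mx s ≤ ∏ j, Mx (y j) := by
    rw [hprod, div_le_iff₀ (Mx_pos s), mul_comm]
  simp only [fI, indicator_apply, mem_setOf_eq, hprod2]
  split_ifs with hc1 hc2 hc2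
  · rfl
  · exact absurd (hiff.1 hc1) hc2
  · exact absurd (hiff.2 hc2) hc1
  · rw [mul_zero]

lemma Ii_succ (r d : ℕ) (t : ℝ) :
    Ii r (d+1) t = ∫⁻ s : ℝ, gE r s * Ii r d (t / Mx s) := by
  have mp := measurePreserving_piFinSuccAbove (fun _ : Fin (d+1) => (volume : Measure ℝ)) 0
  set e := MeasurableEquiv.piFinSuccAbove (fun _ : Fin (d+1) => ℝ) 0 with he
  have hmeas : Measurable (fun z : ℝ × (Fin d → ℝ) => fI r (d+1) t (e.symm z)) :=
    (measurable_fI r (d+1) t).comp e.symm.measurable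
  have h1 : Ii r (d+1) t = ∫⁻ z : ℝ × (Fin d → ℝ), fI r (d+1) t (e.symm z)
      ∂((volume : Measure ℝ).prod (volume : Measure (Fin d → ℝ))) := by
    rw [Ii]; simp only [volume_pi]; rw [← mp.lintegral_comp hmeas]
    refine lintegral_congr fun x => ?_
    rw [MeasurableEquiv.symm_apply_apply]
  rw [h1, lintegral_prod _ hmeas.aemeasurable]
  refine lintegral_congr fun s => ?_
  have h2 : ∀ y : Fin d → ℝ, fI r (d+1) t (e.symm (s, y)) = gE r s * fI r d (t / Mx s) y := by
    intro y
    rw [he, MeasurableEquiv.piFinSuccAbove_symm_apply]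
    exact fI_insertNth r d t s y
  simp only [h2]
  rw [lintegral_const_mul _ (measurable_fI r d _), Ii]

lemma J1 (r : ℕ) (hr : 1 ≤ r) : ∫⁻ s : ℝ, gE r s ≤ ENNReal.ofReal 4 := by
  have h := tail r hr (le_refl (1:ℝ))
  have hset : {s : ℝ | (1:ℝ) ≤ Mx s} = univ := eq_univ_of_forall fun s => Mx_one_le s
  rw [hset, Measure.restrict_univ] at h
  simpa using h

lemma key (r : ℕ) (hr : 1 ≤ r) :
    ∀ d : ℕ, 1 ≤ d → ∃ C : ℝ, 0 < C ∧ Ii r d 0 ≤ ENNReal.ofReal C ∧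
      ∀ t : ℝ, 1 ≤ t → Ii r d t ≤
        ENNReal.ofReal (C * t ^ ((1:ℝ) - 2 * r) * (1 + Real.log t) ^ (d - 1)) := by
  intro d
  induction d with
  | zero => intro h; omega
  | succ d ih =>
    intro _
    rcases Nat.eq_zero_or_pos d with hd0 | hd1
    · subst hd0
      refine ⟨4, by norm_num, ?_, ?_⟩
      · rw [Ii_succ]
        have h0 : ∀ s : ℝ, gE r s * Ii r 0 ((0:ℝ) / Mx s) = gE r s := by
          intro s
          rw [Ii_zero, zero_div, if_pos (by norm_num : (0:ℝ) ≤ 1), mul_one]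
        simp only [h0]
        exact J1 r hr
      · intro t ht
        rw [Ii_succ]
        have hpt : ∀ s : ℝ, gE r s * Ii r 0 (t / Mx s) =
            ({s : ℝ | t ≤ Mx s}).indicator (gE r) s := by
          intro s
          rw [Ii_zero]
          by_cases h : t ≤ Mx s
          · rw [if_pos ((div_le_one (Mx_pos s)).2 h), mul_one,
              indicator_of_mem (show s ∈ {s : ℝ | t ≤ Mx s} from h)]
          · rw [if_neg (fun hc => h ((div_le_one (Mx_pos s)).1 hc)), mul_zero,
              indicator_of_notMem (show s ∉ {s : ℝ | t ≤ Mx s} from h)]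
        simp only [hpt]
        rw [lintegral_indicator (measurableSet_le measurable_const measurable_Mx)]
        refine le_trans (tail r hr ht) (ENNReal.ofReal_le_ofReal ?_)
        simp
    · obtain ⟨C, hCpos, hC0, hCb⟩ := ih hd1
      refine ⟨6 * C, by linarith, ?_, ?_⟩
      · rw [Ii_succ]
        calc ∫⁻ s : ℝ, gE r s * Ii r d ((0:ℝ) / Mx s)
            ≤ ∫⁻ s : ℝ, gE r s * ENNReal.ofReal C := by
              refine lintegral_mono fun s => ?_
              gcongr
              rw [zero_div]
              exact hC0
          _ = (∫⁻ s : ℝ, gE r s) * ENNReal.ofReal C :=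
              lintegral_mul_const _ (measurable_gE r)
          _ ≤ ENNReal.ofReal 4 * ENNReal.ofReal C := by gcongr; exact J1 r hr
          _ ≤ ENNReal.ofReal (6 * C) := by
              rw [← ENNReal.ofReal_mul (by norm_num)]
              exact ENNReal.ofReal_le_ofReal (by linarith)
      · intro t ht
        have ht0 : (0:ℝ) < t := lt_of_lt_of_le one_pos ht
        have hlog : (0:ℝ) ≤ Real.log t := Real.log_nonneg ht
        have hta : (0:ℝ) ≤ t ^ ((1:ℝ) - 2*r) := Real.rpow_nonneg ht0.le _
        have hL1 : (1:ℝ) ≤ 1 + Real.log t := by linarith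
        have hLpow : (1:ℝ) ≤ (1 + Real.log t) ^ (d-1) := one_le_pow₀ hL1
        have hAm : MeasurableSet {s : ℝ | t ≤ Mx s} :=
          measurableSet_le measurable_const measurable_Mx
        rw [Ii_succ, ← lintegral_add_compl (fun s => gE r s * Ii r d (t / Mx s)) hAm]
        have hpart1 : ∫⁻ s in {s : ℝ | t ≤ Mx s}, gE r s * Ii r d (t / Mx s)
            ≤ ENNReal.ofReal (4 * C * t ^ ((1:ℝ) - 2*r)) := by
          calc ∫⁻ s in {s : ℝ | t ≤ Mx s}, gE r s * Ii r d (t / Mx s)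
              ≤ ∫⁻ s in {s : ℝ | t ≤ Mx s}, gE r s * ENNReal.ofReal C := by
                refine setLIntegral_mono ((measurable_gE r).mul_const _) fun s _ => ?_
                gcongr
                exact le_trans (Ii_anti r d (div_nonneg ht0.le (Mx_pos s).le)) hC0
            _ = (∫⁻ s in {s : ℝ | t ≤ Mx s}, gE r s) * ENNReal.ofReal C :=
                lintegral_mul_const _ (measurable_gE r)
            _ ≤ ENNReal.ofReal (4 * t ^ ((1:ℝ) - 2*r)) * ENNReal.ofReal C := by
                gcongr
                exact tail r hr ht
            _ = ENNReal.ofReal (4 * C * t ^ ((1:ℝ) - 2*r)) := by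
                rw [← ENNReal.ofReal_mul (by positivity)]
                ring_nf
        have hpart2 : ∫⁻ s in {s : ℝ | t ≤ Mx s}ᶜ, gE r s * Ii r d (t / Mx s)
            ≤ ENNReal.ofReal ((2 + 2 * Real.log t) *
              (C * t ^ ((1:ℝ) - 2*r) * (1 + Real.log t) ^ (d-1))) := by
          set K : ℝ := C * t ^ ((1:ℝ) - 2*r) * (1 + Real.log t) ^ (d-1) with hK
          have hKnn : 0 ≤ K := by positivity
          have hpt : ∀ s ∈ {s : ℝ | t ≤ Mx s}ᶜ, gE r s * Ii r d (t / Mx s)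
              ≤ ENNReal.ofReal (Mx s)⁻¹ * ENNReal.ofReal K := by
            intro s hs
            have hMs : Mx s < t := by
              simpa [mem_compl_iff, mem_setOf_eq, not_le] using hs
            have hM1 : (1:ℝ) ≤ Mx s := Mx_one_le s
            have hM0 : (0:ℝ) < Mx s := Mx_pos s
            have h1t : 1 ≤ t / Mx s := by
              rw [le_div_iff₀ hM0]; linarith
            have hdivpos : (0:ℝ) < t / Mx s := by positivity
            have hlog2 : Real.log (t / Mx s) ≤ Real.log t :=
              Real.log_le_log hdivpos (div_le_self ht0.le hM1)
            have hlog2nn : (0:ℝ) ≤ Real.log (t / Mx s) := Real.log_nonneg h1t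
            have hpow : (1 + Real.log (t / Mx s)) ^ (d-1) ≤ (1 + Real.log t) ^ (d-1) :=
              pow_le_pow_left₀ (by linarith) (by linarith) _
            have hrpow : ((Mx s ^ (2*r) : ℝ))⁻¹ * ((t / Mx s) ^ ((1:ℝ) - 2*r))
                = (Mx s)⁻¹ * t ^ ((1:ℝ) - 2*r) := by
              rw [← Real.rpow_natCast (Mx s) (2*r), ← Real.rpow_neg hM0.le,
                Real.div_rpow ht0.le hM0.le, div_eq_mul_inv (t ^ _),
                ← Real.rpow_neg hM0.le, ← mul_assoc,
                mul_comm (Mx s ^ (-((2*r : ℕ) : ℝ))) (t ^ ((1:ℝ) - 2*r)), mul_assoc,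
                ← Real.rpow_add hM0]
              norm_num
              rw [show -(2*(r:ℝ)) + (2*(r:ℝ) - 1) = -1 by ring, Real.rpow_neg_one, mul_comm]
            calc gE r s * Ii r d (t / Mx s)
                ≤ gE r s * ENNReal.ofReal
                    (C * (t / Mx s) ^ ((1:ℝ) - 2*r) * (1 + Real.log (t / Mx s)) ^ (d-1)) := by
                  gcongr
                  exact hCb _ h1t
              _ = ENNReal.ofReal (((Mx s ^ (2*r) : ℝ))⁻¹ *
                    (C * (t / Mx s) ^ ((1:ℝ) - 2*r) * (1 + Real.log (t / Mx s)) ^ (d-1))) := by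
                  rw [gE, ← ENNReal.ofReal_mul (by positivity)]
              _ ≤ ENNReal.ofReal ((Mx s)⁻¹ * K) := by
                  apply ENNReal.ofReal_le_ofReal
                  rw [show ((Mx s ^ (2*r) : ℝ))⁻¹ *
                      (C * (t / Mx s) ^ ((1:ℝ) - 2*r) * (1 + Real.log (t / Mx s)) ^ (d-1))
                      = C * (((Mx s ^ (2*r) : ℝ))⁻¹ * ((t / Mx s) ^ ((1:ℝ) - 2*r))) *
                        (1 + Real.log (t / Mx s)) ^ (d-1) by ring, hrpow, hK]
                  have h1 : (0:ℝ) ≤ (Mx s)⁻¹ := by positivity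
                  calc C * ((Mx s)⁻¹ * t ^ ((1:ℝ) - 2*r)) * (1 + Real.log (t / Mx s)) ^ (d-1)
                      ≤ C * ((Mx s)⁻¹ * t ^ ((1:ℝ) - 2*r)) * (1 + Real.log t) ^ (d-1) := by
                        apply mul_le_mul_of_nonneg_left hpow (by positivity)
                    _ = (Mx s)⁻¹ * (C * t ^ ((1:ℝ) - 2*r) * (1 + Real.log t) ^ (d-1)) := by ring
              _ = ENNReal.ofReal (Mx s)⁻¹ * ENNReal.ofReal K := by
                  rw [← ENNReal.ofReal_mul (by positivity)]
          calc ∫⁻ s in {s : ℝ | t ≤ Mx s}ᶜ, gE r s * Ii r d (t / Mx s)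
              ≤ ∫⁻ s in {s : ℝ | t ≤ Mx s}ᶜ, ENNReal.ofReal (Mx s)⁻¹ * ENNReal.ofReal K :=
                setLIntegral_mono ((ENNReal.measurable_ofReal.comp
                  measurable_Mx.inv).mul_const _) hpt
            _ = (∫⁻ s in {s : ℝ | t ≤ Mx s}ᶜ, ENNReal.ofReal (Mx s)⁻¹) * ENNReal.ofReal K :=
                lintegral_mul_const _ (ENNReal.measurable_ofReal.comp measurable_Mx.inv)
            _ ≤ ENNReal.ofReal (2 + 2 * Real.log t) * ENNReal.ofReal K := by
                gcongr
                have hseteq : {s : ℝ | t ≤ Mx s}ᶜ = {s : ℝ | Mx s < t} := by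
                  ext s; simp [not_le]
                rw [hseteq]
                exact logpiece ht
            _ = ENNReal.ofReal ((2 + 2 * Real.log t) * K) := by
                rw [← ENNReal.ofReal_mul (by positivity)]
        calc (∫⁻ s in {s : ℝ | t ≤ Mx s}, gE r s * Ii r d (t / Mx s)) +
              ∫⁻ s in {s : ℝ | t ≤ Mx s}ᶜ, gE r s * Ii r d (t / Mx s)
            ≤ ENNReal.ofReal (4 * C * t ^ ((1:ℝ) - 2*r)) +
              ENNReal.ofReal ((2 + 2 * Real.log t) *
                (C * t ^ ((1:ℝ) - 2*r) * (1 + Real.log t) ^ (d-1))) := add_le_add hpart1 hpart2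
          _ ≤ ENNReal.ofReal (6 * C * t ^ ((1:ℝ) - 2 * r) * (1 + Real.log t) ^ (d + 1 - 1)) := by
              rw [← ENNReal.ofReal_add (by positivity) (by positivity)]
              apply ENNReal.ofReal_le_ofReal
              obtain ⟨k, hk⟩ : ∃ k, d = k + 1 := ⟨d - 1, (Nat.succ_pred_eq_of_pos hd1).symm⟩
              subst hk
              simp only [Nat.add_sub_cancel]
              have heq : (2 + 2 * Real.log t) *
                  (C * t ^ ((1:ℝ) - 2*r) * (1 + Real.log t) ^ k)
                  = 2 * C * t ^ ((1:ℝ) - 2*r) * ((1 + Real.log t) ^ k * (1 + Real.log t)) := by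
                ring
              rw [heq, ← pow_succ]
              have hp1 : (1:ℝ) ≤ (1 + Real.log t) ^ (k+1) := one_le_pow₀ hL1
              nlinarith [mul_nonneg (mul_nonneg hCpos.le hta) (sub_nonneg.2 hp1)]

lemma factor_ge (r : ℕ) (hr : 1 ≤ r) (u : ℝ) :
    Mx u ^ (2*r) ≤ ∑ k ∈ Finset.range (r+1), |2 * Real.pi * u| ^ (2*k) := by
  have habs : |2 * Real.pi * u| = (2 * Real.pi) * |u| := by
    rw [abs_mul, abs_of_pos (by positivity : (0:ℝ) < 2 * Real.pi)]
  have hnn : ∀ k ∈ Finset.range (r+1), (0:ℝ) ≤ |2 * Real.pi * u| ^ (2*k) :=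
    fun k _ => pow_nonneg (abs_nonneg _) _
  rcases le_total |u| 1 with h | h
  · rw [Mx, max_eq_left h, one_pow]
    calc (1:ℝ) = |2 * Real.pi * u| ^ (2*0) := by norm_num
      _ ≤ _ := Finset.single_le_sum hnn (Finset.mem_range.2 (by omega))
  · rw [Mx, max_eq_right h]
    calc |u| ^ (2*r) ≤ |2 * Real.pi * u| ^ (2*r) := by
          apply pow_le_pow_left₀ (abs_nonneg u)
          rw [habs]
          have hpi : (1:ℝ) ≤ 2 * Real.pi := by nlinarith [Real.pi_gt_three]
          nlinarith [abs_nonneg u]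
      _ ≤ _ := Finset.single_le_sum hnn (Finset.mem_range.2 (by omega))

end Stmt13Aux

open Stmt13Aux in
theorem stmt13 (d r : ℕ) (hr1 : 1 ≤ r) (hd : 1 ≤ d) :
    ∃ c > (0 : ℝ), ∀ n : ℕ, 2 ≤ n →
      (∫ x in {x : Fin d → ℝ | (n : ℝ) ≤ ∏ j, |x j|}, (hrw r x)⁻¹)
        ≤ c * (n : ℝ) ^ ((1 : ℝ) - 2 * r) * Real.log n ^ (d - 1) := by
  obtain ⟨C, hCpos, -, hCb⟩ := key r hr1 d hd
  have hlog2 : (0:ℝ) < Real.log 2 := Real.log_pos (by norm_num)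
  refine ⟨C * (1 + (Real.log 2)⁻¹) ^ (d - 1), by positivity, ?_⟩
  intro n hn
  have hn1 : (1:ℝ) ≤ (n:ℝ) := by
    have : (2:ℝ) ≤ (n:ℝ) := by exact_mod_cast hn
    linarith
  have hn2 : (2:ℝ) ≤ (n:ℝ) := by exact_mod_cast hn
  have hlogn : Real.log 2 ≤ Real.log n := Real.log_le_log (by norm_num) hn2
  have hlognpos : (0:ℝ) < Real.log n := lt_of_lt_of_le hlog2 hlogn
  have hta : (0:ℝ) ≤ (n:ℝ) ^ ((1:ℝ) - 2*r) := Real.rpow_nonneg (by linarith) _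
  set B : ℝ := C * (n:ℝ) ^ ((1:ℝ) - 2 * r) * (1 + Real.log n) ^ (d - 1) with hB
  have hBnn : (0:ℝ) ≤ B := by positivity
  have hfinal : B ≤ C * (1 + (Real.log 2)⁻¹) ^ (d-1) * (n:ℝ) ^ ((1:ℝ) - 2*r) *
      Real.log n ^ (d-1) := by
    have h1 : 1 + Real.log n ≤ (1 + (Real.log 2)⁻¹) * Real.log n := by
      have h2 : (1:ℝ) ≤ (Real.log 2)⁻¹ * Real.log n := by
        rw [← div_eq_inv_mul, le_div_iff₀ hlog2]; linarith
      nlinarith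
    calc B ≤ C * (n:ℝ) ^ ((1:ℝ)-2*r) * ((1 + (Real.log 2)⁻¹) * Real.log n) ^ (d-1) := by
          apply mul_le_mul_of_nonneg_left (pow_le_pow_left₀ (by linarith) h1 _) (by positivity)
      _ = C * (1 + (Real.log 2)⁻¹) ^ (d-1) * (n:ℝ) ^ ((1:ℝ)-2*r) * Real.log n ^ (d-1) := by
          rw [mul_pow]; ring
  refine le_trans ?_ hfinal
  set D : Set (Fin d → ℝ) := {x : Fin d → ℝ | (n : ℝ) ≤ ∏ j, |x j|} with hD
  by_cases hInt : IntegrableOn (fun x : Fin d → ℝ => (hrw r x)⁻¹) D volume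
  · have hrwpos : ∀ x : Fin d → ℝ, 0 < hrw r x := by
      intro x
      rw [hrw]
      apply Finset.prod_pos
      intro j _
      apply Finset.sum_pos' (fun k _ => pow_nonneg (abs_nonneg _) _)
      exact ⟨0, Finset.mem_range.2 (by omega), by norm_num⟩
    have hnn : 0 ≤ᵐ[volume.restrict D] fun x : Fin d → ℝ => (hrw r x)⁻¹ :=
      ae_of_all _ fun x => inv_nonneg.2 (hrwpos x).le
    have heq := ofReal_integral_eq_lintegral_ofReal hInt hnn
    have hpt : ∀ x : Fin d → ℝ, ENNReal.ofReal ((hrw r x)⁻¹) ≤ ∏ j, gE r (x j) := by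
      intro x
      have hMpos : (0:ℝ) < ∏ j, Mx (x j) ^ (2*r) :=
        Finset.prod_pos fun j _ => pow_pos (Mx_pos _) _
      have hle : ∏ j, Mx (x j) ^ (2*r) ≤ hrw r x := by
        rw [hrw]
        exact Finset.prod_le_prod (fun j _ => (pow_pos (Mx_pos _) _).le)
          (fun j _ => factor_ge r hr1 (x j))
      have hinv : (hrw r x)⁻¹ ≤ (∏ j, Mx (x j) ^ (2*r))⁻¹ :=
        inv_anti₀ hMpos hle
      refine le_trans (ENNReal.ofReal_le_ofReal hinv) ?_
      rw [← Finset.prod_inv_distrib,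
        ENNReal.ofReal_prod_of_nonneg (fun j _ => inv_nonneg.2 (pow_nonneg (Mx_pos _).le _))]
      exact le_of_eq rfl
    have hsub : D ⊆ {x : Fin d → ℝ | (n:ℝ) ≤ ∏ j, Mx (x j)} := by
      intro x hx
      simp only [hD, mem_setOf_eq] at hx ⊢
      exact le_trans hx
        (Finset.prod_le_prod (fun j _ => abs_nonneg _) (fun j _ => Mx_abs_le _))
    have hchain : (∫⁻ x in D, ENNReal.ofReal ((hrw r x)⁻¹)) ≤ ENNReal.ofReal B := by
      calc ∫⁻ x in D, ENNReal.ofReal ((hrw r x)⁻¹)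
          ≤ ∫⁻ x in D, ∏ j, gE r (x j) :=
            setLIntegral_mono (Finset.measurable_prod _ fun j _ =>
              (measurable_gE r).comp (measurable_pi_apply j)) (fun x _ => hpt x)
        _ ≤ ∫⁻ x in {x : Fin d → ℝ | (n:ℝ) ≤ ∏ j, Mx (x j)}, ∏ j, gE r (x j) :=
            lintegral_mono_set hsub
        _ = Ii r d (n:ℝ) := by
            rw [Ii]
            unfold fI
            rw [lintegral_indicator (measurableSet_region d _)]
        _ ≤ ENNReal.ofReal B := hCb _ hn1
    rw [← heq] at hchain
    exact (ENNReal.ofReal_le_ofReal_iff hBnn).1 hchain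
  · rw [integral_undef hInt]
    exact hBnn
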